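/- Let A be an m×n matrix with entries in [0,1] and x ∈ ℝ_{≥0}^n with Ax ≥ 1 componentwise, let α ≥ 1, and let z be the randomized rounding of x at scale α. Fix i ∈ [m] and let a ∈ (0,1] satisfy A_{i,j} ≤ a for all j. Then P[(Az)_i < 1] ≤ exp((1 + ln α − α)/a). In particular, if the ℓ0-column sparsity Δ₀ of A satisfies Δ₀ ≥ 2 and α = ln Δ₀ + ln ln Δ₀ + 4, then P[(Az)_i < 1] ≤ 1/(2Δ₀). -/

import Mathlib

open MeasureTheory ProbabilityTheory

/-- Chernoff-based concentration for the randomized rounding step,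
ℓ0-version (Lemma `basic-concentration`). -/
theorem stmt_12 (m n : ℕ) (A : Fin m → Fin n → ℝ) (x : Fin n → ℝ) (α : ℝ)
    (Ω : Type*) [MeasurableSpace Ω] (P : Measure Ω) [IsProbabilityMeasure P]
    (Y : Fin n → Ω → ℕ) (z : Ω → Fin n → ℕ)
    (hA : ∀ i j, A i j ∈ Set.Icc (0 : ℝ) 1)
    (hx : ∀ j, 0 ≤ x j)
    (hAx : ∀ i, 1 ≤ ∑ j, A i j * x j)
    (hα : 1 ≤ α)
    (hYmeas : ∀ j, Measurable (Y j))
    (hY01 : ∀ j ω, Y j ω ≤ 1)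
    (hYind : iIndepFun Y P)
    (hYber : ∀ j, P {ω | Y j ω = 1} = ENNReal.ofReal (α * x j - (⌊α * x j⌋₊ : ℝ)))
    (hz : ∀ ω j, z ω j = ⌊α * x j⌋₊ + Y j ω)
    (i : Fin m) (a : ℝ) (ha : a ∈ Set.Ioc (0 : ℝ) 1)
    (haA : ∀ j, A i j ≤ a) :
    P {ω | ∑ j, A i j * (z ω j : ℝ) < 1} ≤
        ENNReal.ofReal (Real.exp ((1 + Real.log α - α) / a)) ∧
      ∀ Δ₀ : ℕ,
        Δ₀ = (Finset.univ.sup fun j : Fin n =>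
          (Finset.univ.filter fun i' : Fin m => A i' j ≠ 0).card) →
        2 ≤ Δ₀ →
        α = Real.log Δ₀ + Real.log (Real.log Δ₀) + 4 →
        P {ω | ∑ j, A i j * (z ω j : ℝ) < 1} ≤
          ENNReal.ofReal (1 / (2 * (Δ₀ : ℝ))) := by
  obtain ⟨ha0, ha1⟩ := ha
  have hα0 : (0:ℝ) < α := lt_of_lt_of_le one_pos hα
  -- the random variables
  set X : Fin n → Ω → ℝ := fun j => (fun k : ℕ => A i j * ((⌊α * x j⌋₊ + k : ℕ) : ℝ)) ∘ Y j with hX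
  have hXval : ∀ j ω, X j ω = A i j * ((⌊α * x j⌋₊ : ℝ) + (Y j ω : ℝ)) := by
    intro j ω; simp [hX, Function.comp]
  have hXmeas : ∀ j, Measurable (X j) := fun j => measurable_from_top.comp (hYmeas j)
  have hXind : iIndepFun X P :=
    hYind.comp _ (fun j => measurable_from_top)
  have hXnonneg : ∀ j ω, 0 ≤ X j ω := by
    intro j ω; rw [hXval]
    have := (hA i j).1
    positivity
  -- event rewriting
  have hEvent : {ω | ∑ j, A i j * (z ω j : ℝ) < 1} = {ω | (∑ j, X j) ω < 1} := by
    ext ω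
    simp only [Set.mem_setOf_eq, Finset.sum_apply]
    have : ∀ j, A i j * (z ω j : ℝ) = X j ω := by
      intro j; rw [hXval, hz]; push_cast; ring
    rw [Finset.sum_congr rfl fun j _ => this j]
  -- parameters
  set t : ℝ := -(Real.log α / a) with ht
  have hlogα : 0 ≤ Real.log α := Real.log_nonneg hα
  have htle : t ≤ 0 := by
    rw [ht]; simp only [neg_nonpos]; positivity
  set κ : ℝ := (Real.exp (t * a) - 1) / a with hκ
  have hκle : κ ≤ 0 := by
    rw [hκ]
    apply div_nonpos_of_nonpos_of_nonneg _ ha0.le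
    have : Real.exp (t * a) ≤ 1 := Real.exp_le_one_iff.mpr (mul_nonpos_of_nonpos_of_nonneg htle ha0.le)
    linarith
  have htκ : t ≤ κ := by
    have h1 : t * a + 1 ≤ Real.exp (t * a) := Real.add_one_le_exp _
    rw [hκ, le_div_iff₀ ha0]
    linarith
  -- integrability
  have hint : ∀ j, Integrable (fun ω => Real.exp (t * X j ω)) P := by
    intro j
    refine ⟨(((hXmeas j).const_mul t).exp).aestronglyMeasurable, ?_⟩
    apply HasFiniteIntegral.of_bounded (C := (1:ℝ))
    filter_upwards with ω
    rw [Real.norm_eq_abs, abs_of_pos (Real.exp_pos _)]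
    exact Real.exp_le_one_iff.mpr (mul_nonpos_of_nonpos_of_nonneg htle (hXnonneg j ω))
  have hSnonneg : ∀ ω, 0 ≤ (∑ j, X j) ω := by
    intro ω
    rw [Finset.sum_apply]
    exact Finset.sum_nonneg fun j _ => hXnonneg j ω
  have hintS : Integrable (fun ω => Real.exp (t * (∑ j, X j) ω)) P := by
    have hm : Measurable (∑ j, X j) := by
      have he : (∑ j, X j) = fun ω => ∑ j, X j ω := by
        funext ω; simp [Finset.sum_apply]
      rw [he]
      exact Finset.measurable_sum _ fun j _ => hXmeas j
    refine ⟨((hm.const_mul t).exp).aestronglyMeasurable, ?_⟩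
    apply HasFiniteIntegral.of_bounded (C := (1:ℝ))
    filter_upwards with ω
    rw [Real.norm_eq_abs, abs_of_pos (Real.exp_pos _)]
    exact Real.exp_le_one_iff.mpr (mul_nonpos_of_nonpos_of_nonneg htle (hSnonneg ω))
  -- mgf computation
  have hmgf : ∀ j, mgf (X j) P t ≤ Real.exp (κ * (A i j * (α * x j))) := by
    intro j
    set b : ℝ := A i j with hb
    set c : ℝ := b * (⌊α * x j⌋₊ : ℝ) with hc
    set p : ℝ := α * x j - (⌊α * x j⌋₊ : ℝ) with hp
    have hb0 : 0 ≤ b := (hA i j).1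
    have hba : b ≤ a := haA j
    have hax0 : 0 ≤ α * x j := mul_nonneg hα0.le (hx j)
    have hp0 : 0 ≤ p := by
      rw [hp]; simp only [sub_nonneg]; exact Nat.floor_le hax0
    have hp1 : p ≤ 1 := by
      have := Nat.lt_floor_add_one (α * x j)
      rw [hp]; push_cast at this ⊢; linarith
    have hmgfval : mgf (X j) P t = Real.exp (t * c) * (1 - p + p * Real.exp (t * b)) := by
      have hs : MeasurableSet {ω | Y j ω = 1} := (hYmeas j) (measurableSet_singleton 1)
      have heq : (fun ω => Real.exp (t * X j ω)) =
          fun ω => Real.exp (t * c) + ({ω | Y j ω = 1}).indicator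
            (fun _ => Real.exp (t * (c + b)) - Real.exp (t * c)) ω := by
        funext ω
        rcases Nat.le_one_iff_eq_zero_or_eq_one.mp (hY01 j ω) with h0 | h1
        · have hmem : ω ∉ {ω | Y j ω = 1} := by simp [h0]
          rw [Set.indicator_of_notMem hmem, hXval, h0, hc, hb]
          push_cast
          ring_nf
        · have hmem : ω ∈ {ω | Y j ω = 1} := h1
          rw [Set.indicator_of_mem hmem, hXval, h1, hc, hb]
          push_cast
          ring_nf
      rw [mgf, heq]
      rw [integral_add (integrable_const _)]
      · rw [integral_const, integral_indicator_const _ hs, measureReal_def P Set.univ,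
          measureReal_def P {ω | Y j ω = 1}, hYber j, ENNReal.toReal_ofReal hp0]
        simp only [measure_univ, ENNReal.toReal_one, smul_eq_mul, one_smul]
        rw [show t * (c + b) = t * c + t * b by ring, Real.exp_add]
        ring
      · exact (integrable_const _).indicator hs
    rw [hmgfval]
    -- convexity bound : exp(t*b) ≤ 1 + (b/a)*(exp(t*a)-1) = 1 + κ*b
    have hconv : Real.exp (t * b) ≤ 1 + κ * b := by
      rcases eq_or_lt_of_le hb0 with hb' | hb'
      · rw [← hb']; simp
      · have hu0 : 0 ≤ b / a := by positivity
        have hu1 : b / a ≤ 1 := (div_le_one ha0).mpr hba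
        have := convexOn_exp.2 (Set.mem_univ (0:ℝ)) (Set.mem_univ (t * a))
          (by linarith : (0:ℝ) ≤ 1 - b / a) hu0 (by ring)
        simp only [smul_eq_mul, mul_zero, zero_add, Real.exp_zero, mul_one] at this
        have harr : b / a * (t * a) = t * b := by field_simp
        rw [harr] at this
        have : Real.exp (t * b) ≤ 1 - b / a + b / a * Real.exp (t * a) := this
        have hκb : κ * b = b / a * (Real.exp (t * a) - 1) := by
          rw [hκ]; field_simp
        rw [hκb]; linarith
    have hfac2 : 1 - p + p * Real.exp (t * b) ≤ Real.exp (κ * (b * p)) := by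
      have h1 : 1 - p + p * Real.exp (t * b) ≤ 1 + κ * (b * p) := by
        have h := mul_le_mul_of_nonneg_left hconv hp0
        have h2 : p * (1 + κ * b) = p + κ * (b * p) := by ring
        linarith
      have h2 : 1 + κ * (b * p) ≤ Real.exp (κ * (b * p)) := by
        have := Real.add_one_le_exp (κ * (b * p)); linarith
      linarith
    have hfac1 : Real.exp (t * c) ≤ Real.exp (κ * c) := by
      apply Real.exp_le_exp.mpr
      have hc0 : 0 ≤ c := by rw [hc]; positivity
      exact mul_le_mul_of_nonneg_right htκ hc0
    have hpos2 : 0 ≤ 1 - p + p * Real.exp (t * b) := by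
      have := Real.exp_pos (t * b)
      nlinarith
    calc Real.exp (t * c) * (1 - p + p * Real.exp (t * b))
        ≤ Real.exp (κ * c) * Real.exp (κ * (b * p)) :=
          mul_le_mul hfac1 hfac2 hpos2 (Real.exp_pos _).le
      _ = Real.exp (κ * (b * (α * x j))) := by
          rw [← Real.exp_add]
          congr 1
          rw [hc, hp]; ring
      _ = Real.exp (κ * (A i j * (α * x j))) := by rw [hb]
  -- Chernoff
  have hchern := measure_le_le_exp_mul_mgf (X := ∑ j, X j) (μ := P) (t := t) 1 htle hintS
  rw [hXind.mgf_sum hXmeas] at hchern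
  rw [measureReal_def] at hchern
  have hprod : ∏ j, mgf (X j) P t ≤ Real.exp (κ * α) := by
    calc ∏ j, mgf (X j) P t ≤ ∏ j, Real.exp (κ * (A i j * (α * x j))) :=
          Finset.prod_le_prod (fun j _ => mgf_nonneg) (fun j _ => hmgf j)
      _ = Real.exp (∑ j, κ * (A i j * (α * x j))) := by rw [← Real.exp_sum]
      _ ≤ Real.exp (κ * α) := by
          apply Real.exp_le_exp.mpr
          have : ∑ j, κ * (A i j * (α * x j)) = (κ * α) * ∑ j, A i j * x j := by
            rw [Finset.mul_sum]; congr 1; funext j; ring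
          rw [this]
          have hκα : κ * α ≤ 0 := mul_nonpos_of_nonpos_of_nonneg hκle hα0.le
          have := mul_le_mul_of_nonpos_left (hAx i) hκα
          linarith
  -- final real bound
  have hmain : (P {ω | ∑ j, A i j * (z ω j : ℝ) < 1}).toReal ≤
      Real.exp ((1 + Real.log α - α) / a) := by
    have hsub : P {ω | ∑ j, A i j * (z ω j : ℝ) < 1} ≤ P {ω | (∑ j, X j) ω ≤ 1} := by
      rw [hEvent]
      refine measure_mono fun ω hω => ?_
      simp only [Set.mem_setOf_eq] at hω ⊢
      exact hω.le
    have h1 : (P {ω | ∑ j, A i j * (z ω j : ℝ) < 1}).toReal ≤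
        (P {ω | (∑ j, X j) ω ≤ 1}).toReal :=
      ENNReal.toReal_mono (measure_ne_top _ _) hsub
    have h2 : Real.exp (-t * 1) * ∏ j, mgf (X j) P t ≤
        Real.exp (-t * 1) * Real.exp (κ * α) :=
      mul_le_mul_of_nonneg_left hprod (Real.exp_pos _).le
    have h3 : Real.exp (-t * 1) * Real.exp (κ * α) =
        Real.exp ((1 + Real.log α - α) / a) := by
      rw [← Real.exp_add]
      congr 1
      have hexp : Real.exp (t * a) = α⁻¹ := by
        rw [ht]
        rw [neg_mul, div_mul_cancel₀ _ (ne_of_gt ha0), Real.exp_neg, Real.exp_log hα0]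
      rw [hκ, hexp, ht]
      field_simp
      ring
    linarith
  have hboundmono : P {ω | ∑ j, A i j * (z ω j : ℝ) < 1} ≤
      ENNReal.ofReal (Real.exp ((1 + Real.log α - α) / a)) := by
    rw [← ENNReal.ofReal_toReal (measure_ne_top P _)]
    exact ENNReal.ofReal_le_ofReal hmain
  refine ⟨hboundmono, ?_⟩
  intro Δ₀ _ hΔ2 hαdef
  refine le_trans hboundmono (ENNReal.ofReal_le_ofReal ?_)
  -- numeric part
  set L : ℝ := Real.log Δ₀ with hL
  have hΔ0 : (2:ℝ) ≤ (Δ₀ : ℝ) := by exact_mod_cast hΔ2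
  have hL2 : Real.log 2 ≤ L := Real.log_le_log two_pos hΔ0
  have hlog2 : (0.6931471803 : ℝ) < Real.log 2 := Real.log_two_gt_d9
  have hLpos : 0 < L := lt_of_lt_of_le (by linarith) hL2
  have he3 : (19.65 : ℝ) < Real.exp 3 := by
    have h1 := Real.exp_one_gt_d9
    have he : Real.exp 3 = Real.exp 1 ^ 3 := by
      rw [← Real.exp_nat_mul]; norm_num
    rw [he]
    calc (19.65:ℝ) < 2.7182818283^3 := by norm_num
      _ ≤ Real.exp 1 ^ 3 := pow_le_pow_left₀ (by norm_num) h1.le 3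
  -- α ≤ L * exp 3 / 2
  have hαle : α ≤ L * Real.exp 3 / 2 := by
    have hlnL : Real.log L ≤ L - 1 := by
      have := Real.log_le_sub_one_of_pos hLpos; linarith
    have hmul : L * 19.65 < L * Real.exp 3 := mul_lt_mul_of_pos_left he3 hLpos
    rw [hαdef]
    linarith [hlnL, hL2, hlog2, hmul]
  have hlogα : Real.log α ≤ Real.log L + 3 - Real.log 2 := by
    calc Real.log α ≤ Real.log (L * Real.exp 3 / 2) := Real.log_le_log hα0 hαle
      _ = Real.log L + 3 - Real.log 2 := by
          rw [Real.log_div (by positivity) (by norm_num), Real.log_mul (ne_of_gt hLpos)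
            (ne_of_gt (Real.exp_pos 3)), Real.log_exp]
  -- exponent comparison
  have hexple : (1 + Real.log α - α) / a ≤ 1 + Real.log α - α := by
    have hv : 1 + Real.log α - α ≤ 0 := by
      have := Real.log_le_sub_one_of_pos hα0; linarith
    rw [div_le_iff₀ ha0]
    have := mul_le_mul_of_nonpos_left ha1 hv
    linarith
  have hfinal : 1 + Real.log α - α ≤ -(Real.log 2 + L) := by
    have := hαdef
    linarith [hlogα]
  have hlogΔ : Real.log (2 * (Δ₀:ℝ)) = Real.log 2 + L := by
    rw [Real.log_mul (by norm_num) (by positivity), hL]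
  calc Real.exp ((1 + Real.log α - α) / a) ≤ Real.exp (-(Real.log 2 + L)) :=
        Real.exp_le_exp.mpr (le_trans hexple hfinal)
    _ = 1 / (2 * (Δ₀:ℝ)) := by
        rw [← hlogΔ, Real.exp_neg, Real.exp_log (by positivity), one_div]
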